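/- Let f(x) = x^{2g+1} - b·x - (p·c)/4 ∈ ℤ[1/2][x] be a Mori trinomial. Then for every odd prime ℓ, the reduction f(x) mod ℓ ∈ 𝔽_ℓ[x] has at most one multiple root in an algebraic closure of 𝔽_ℓ; if such a multiple root exists, it is a double root (multiplicity exactly 2) and it lies in 𝔽_ℓ. -/

import Mathlib

open Polynomial

noncomputable section

/-- `(g,p,b,c)` is a Mori quadruple. -/
def IsMoriQuadruple (g p : ℕ) (b c : ℤ) : Prop :=
  0 < g ∧ p.Prime ∧ Odd p ∧
    (∀ q : ℕ, q.Prime → q ∣ g → q ∣ (p - 1) / 2) ∧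
    orderOf (b : ZMod p) = p - 1 ∧
    Odd c ∧ IsCoprime b c ∧ IsCoprime b (2 * (g : ℤ) + 1) ∧ IsCoprime c (g : ℤ)

/-- The reduction modulo an odd prime `ℓ` of the Mori trinomial
`f = x^(2g+1) - b·x - (p·c)/4 ∈ ℤ[1/2][x]`; since `ℓ` is odd, `4` is invertible mod `ℓ`. -/
def moriPolyMod (g p : ℕ) (b c : ℤ) (ℓ : ℕ) : (ZMod ℓ)[X] :=
  X ^ (2 * g + 1) - C (b : ZMod ℓ) * X
    - C ((p : ZMod ℓ) * (c : ZMod ℓ) * (4 : ZMod ℓ)⁻¹)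

/-- For a Mori trinomial `f` and every odd prime `ℓ`, the reduction `f mod ℓ ∈ 𝔽_ℓ[x]`
has at most one multiple root in an algebraic closure of `𝔽_ℓ`; if such a root exists,
it has multiplicity exactly `2` and lies in `𝔽_ℓ`. -/
theorem mori_trinomial_at_most_one_double_root_mod_ell
    (g p : ℕ) (b c : ℤ) (h : IsMoriQuadruple g p b c)
    (ℓ : ℕ) [Fact ℓ.Prime] (hℓ : ℓ ≠ 2) :
    ∀ x : AlgebraicClosure (ZMod ℓ),
      2 ≤ ((moriPolyMod g p b c ℓ).map
            (algebraMap (ZMod ℓ) (AlgebraicClosure (ZMod ℓ)))).rootMultiplicity x →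
        ((moriPolyMod g p b c ℓ).map
            (algebraMap (ZMod ℓ) (AlgebraicClosure (ZMod ℓ)))).rootMultiplicity x = 2 ∧
        (∃ x₀ : ZMod ℓ, algebraMap (ZMod ℓ) (AlgebraicClosure (ZMod ℓ)) x₀ = x) ∧
        (∀ y : AlgebraicClosure (ZMod ℓ),
          2 ≤ ((moriPolyMod g p b c ℓ).map
                (algebraMap (ZMod ℓ) (AlgebraicClosure (ZMod ℓ)))).rootMultiplicity y →
            y = x) := by
  obtain ⟨hg, hp, hpodd, hdiv, hord, hcodd, hbc, hbn, hcg⟩ := h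
  have hℓp : ℓ.Prime := Fact.out
  set K := AlgebraicClosure (ZMod ℓ) with hK
  set φ := algebraMap (ZMod ℓ) K with hφ
  have hφinj : Function.Injective φ := (algebraMap (ZMod ℓ) K).injective
  set a : ZMod ℓ := (p : ZMod ℓ) * (c : ZMod ℓ) * (4 : ZMod ℓ)⁻¹ with ha
  set F : K[X] := (moriPolyMod g p b c ℓ).map φ with hFdef
  set B : K := φ ((b : ZMod ℓ)) with hBdef
  set A : K := φ a with hAdef
  set N : K := ((2 * g + 1 : ℕ) : K) with hNdef
  have hFeq : F = X ^ (2*g+1) - C B * X - C A := by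
    rw [hFdef, moriPolyMod, Polynomial.map_sub, Polynomial.map_sub, Polynomial.map_mul,
      Polynomial.map_pow, map_X, map_C, map_C]
  -- F ≠ 0
  have hF0 : F ≠ 0 := by
    intro h0
    have : F.coeff (2*g+1) = 1 := by
      rw [hFeq]
      simp [coeff_X_pow, coeff_C, coeff_X]
      omega
    rw [h0] at this
    simp at this
  -- derivative
  have hgn : 2 * g + 1 - 1 = 2 * g := by omega
  have hFder : F.derivative = C N * X ^ (2*g) - C B := by
    rw [hFeq]
    simp [derivative_X_pow, hgn, hNdef]
    rw [Nat.cast_mul, Nat.cast_ofNat, C_mul, map_natCast]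
  -- number theory facts
  have h4 : (4 : ZMod ℓ) ≠ 0 := by
    have h4' : ((4:ℕ) : ZMod ℓ) ≠ 0 := by
      rw [Ne, ZMod.natCast_eq_zero_iff]
      intro hd
      have h2 : ℓ ∣ 2 := hℓp.dvd_of_dvd_pow (n := 2) (by norm_num; exact hd)
      exact hℓ ((Nat.prime_dvd_prime_iff_eq hℓp Nat.prime_two).mp h2)
    simpa using h4'
  -- ℓ ∣ g consequences
  have hgc : ℓ ∣ g → (c : ZMod ℓ) ≠ 0 := by
    intro hlg hc0
    obtain ⟨u, v, huv⟩ := hcg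
    have := congrArg (fun z : ℤ => ((z : ZMod ℓ))) huv
    push_cast at this
    rw [hc0] at this
    have hgz : ((g:ℤ) : ZMod ℓ) = 0 := by
      push_cast
      exact (ZMod.natCast_eq_zero_iff g ℓ).mpr hlg
    rw [show ((g:ℤ) : ZMod ℓ) = ((g:ℕ) : ZMod ℓ) by push_cast; rfl] at hgz
    rw [hgz] at this
    simp at this
  have hgp : ℓ ∣ g → (p : ZMod ℓ) ≠ 0 := by
    intro hlg hp0
    have hd1 : ℓ ∣ (p - 1) / 2 := hdiv ℓ hℓp hlg
    have hd2 : ℓ ∣ p - 1 := hd1.trans (Nat.div_dvd_of_dvd (by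
      obtain ⟨k, hk⟩ := hpodd
      omega))
    have hd3 : ℓ ∣ p := (ZMod.natCast_eq_zero_iff p ℓ).mp hp0
    have := Nat.dvd_sub hd3 hd2
    have hp1 : p - (p - 1) = 1 := by have := hp.two_le; omega
    rw [hp1] at this
    exact hℓp.one_lt.ne' (Nat.dvd_one.mp this)
  have hone : (1 : ZMod ℓ) ≠ 0 := one_ne_zero
  -- coprimality in ZMod ℓ
  have hcop : ∀ u v : ℤ, IsCoprime u v → (u : ZMod ℓ) = 0 → (v : ZMod ℓ) ≠ 0 := by
    intro u v huv hu0 hv0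
    obtain ⟨s, t, hst⟩ := huv
    have := congrArg (fun z : ℤ => ((z : ZMod ℓ))) hst
    push_cast at this
    rw [hu0, hv0] at this
    simp at this
  -- N = 1 → ℓ ∣ g
  have hNg : ((2*g+1 : ℕ) : ZMod ℓ) = 1 → ℓ ∣ g := by
    intro h1
    have h2 : ((2*g : ℕ) : ZMod ℓ) = 0 := by
      push_cast at h1 ⊢
      linear_combination h1
    have h3 : ℓ ∣ 2 * g := (ZMod.natCast_eq_zero_iff _ ℓ).mp h2
    rcases (Nat.Prime.dvd_mul hℓp).mp h3 with h4 | h4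
    · exact absurd ((Nat.prime_dvd_prime_iff_eq hℓp Nat.prime_two).mp h4) hℓ
    · exact h4
  -- b ≢ 0 when ℓ = p
  have hbp : (b : ZMod ℓ) = 0 → (p : ZMod ℓ) ≠ 0 := by
    intro hb0 hp0
    have hlp : ℓ = p := (Nat.prime_dvd_prime_iff_eq hℓp hp).mp
      ((ZMod.natCast_eq_zero_iff p ℓ).mp hp0)
    subst hlp
    haveI : Fact ℓ.Prime := ⟨hℓp⟩
    have hb1 : (b : ZMod ℓ) ^ (ℓ - 1) = 1 := by
      rw [← hord]; exact pow_orderOf_eq_one _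
    rw [hb0, zero_pow (by have := hℓp.two_le; omega)] at hb1
    exact zero_ne_one hb1
  -- A ≠ 0 when ℓ ∣ g
  have hAg : ℓ ∣ g → A ≠ 0 := by
    intro hlg hA0
    have : a = 0 := hφinj (by rw [← hAdef, hA0, map_zero])
    rw [ha] at this
    rcases mul_eq_zero.mp this with h1 | h1
    · rcases mul_eq_zero.mp h1 with h2 | h2
      · exact hgp hlg h2
      · exact hgc hlg h2
    · exact (inv_ne_zero h4) h1
  -- now the analysis
  intro x hx
  have hroot : F.IsRoot x ∧ F.derivative.IsRoot x :=
    (one_lt_rootMultiplicity_iff_isRoot hF0).mp (by omega)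
  -- evaluate
  have hre : ∀ y : K, F.IsRoot y → y ^ (2*g+1) - B * y - A = 0 := by
    intro y hy
    have := hy
    rw [hFeq] at this
    simpa [IsRoot, eval_sub, eval_mul, eval_pow] using this
  have hde : ∀ y : K, F.derivative.IsRoot y → N * y ^ (2*g) - B = 0 := by
    intro y hy
    have := hy
    rw [hFder] at this
    simpa [IsRoot, eval_sub, eval_mul, eval_pow] using this
  have hrx := hre x hroot.1
  have hdx := hde x hroot.2
  -- N ≠ 0
  have hN0 : N ≠ 0 := by
    intro h0
    have hB0 : B = 0 := by rw [h0] at hdx; linear_combination -hdx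
    have hb0 : (b : ZMod ℓ) = 0 := hφinj (by rw [← hBdef, hB0, map_zero])
    have hn0 : ((2*(g:ℤ)+1 : ℤ) : ZMod ℓ) = 0 := by
      have : ((2*g+1 : ℕ) : ZMod ℓ) = 0 := by
        apply hφinj
        rw [map_natCast, map_zero, ← hNdef, h0]
      push_cast at this ⊢
      exact this
    exact hcop b (2*(g:ℤ)+1) hbn hb0 hn0
  -- B ≠ 0
  have hB0 : B ≠ 0 := by
    intro h0
    have hx0 : x = 0 := by
      have : N * x ^ (2*g) = 0 := by rw [h0] at hdx; linear_combination hdx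
      have := (mul_eq_zero.mp this).resolve_left hN0
      exact pow_eq_zero_iff (by omega) |>.mp this
    have hb0 : (b : ZMod ℓ) = 0 := hφinj (by rw [← hBdef, h0, map_zero])
    have hA0 : A = 0 := by
      rw [hx0, h0] at hrx
      rw [zero_pow (by omega)] at hrx
      linear_combination -hrx
    have ha0 : a = 0 := hφinj (by rw [← hAdef, hA0, map_zero])
    rw [ha] at ha0
    rcases mul_eq_zero.mp ha0 with h1 | h1
    · rcases mul_eq_zero.mp h1 with h2 | h2
      · exact hbp hb0 h2
      · exact hcop b c hbc hb0 h2
    · exact (inv_ne_zero h4) h1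
  -- N ≠ 1
  have hN1 : N ≠ 1 := by
    intro h1
    have hnz1 : ((2*g+1 : ℕ) : ZMod ℓ) = 1 := hφinj (by rw [map_natCast, map_one, ← hNdef, h1])
    have hA0 : A = 0 := by
      have h2 : x ^ (2*g) = B := by rw [h1] at hdx; linear_combination hdx
      have h3 : x ^ (2*g+1) = B * x := by rw [pow_succ, h2]
      rw [h3] at hrx
      linear_combination -hrx
    exact hAg (hNg hnz1) hA0
  have hBN : B * (1 - N) ≠ 0 := mul_ne_zero hB0 (sub_ne_zero.mpr (Ne.symm hN1))
  -- key linear equation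
  have key : ∀ y : K, F.IsRoot y → F.derivative.IsRoot y → y * (B * (1 - N)) = N * A := by
    intro y h1 h2
    have e1 := hde y h2
    have e2 := hre y h1
    have hps : y ^ (2*g+1) = y ^ (2*g) * y := pow_succ y (2*g)
    linear_combination N * e2 - y * e1 - N * hps
  have hxval : x * (B * (1 - N)) = N * A := key x hroot.1 hroot.2
  refine ⟨?_, ?_, ?_⟩
  · -- multiplicity exactly 2
    by_contra hne
    have h3 : 3 ≤ F.rootMultiplicity x := by omega
    have hdvd : (X - C x) ^ 3 ∣ F := dvd_trans (pow_dvd_pow _ h3) (F.pow_rootMultiplicity_dvd x)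
    have hdvd2 : (X - C x) ∣ derivative^[2] F := by
      have := pow_sub_dvd_iterate_derivative_of_pow_dvd 2 hdvd
      simpa using this
    have hroot2 : (derivative^[2] F).IsRoot x := dvd_iff_isRoot.mp hdvd2
    have hF2 : derivative^[2] F = C (N * ((2*g : ℕ) : K)) * X ^ (2*g-1) := by
      have h21 : derivative^[2] F = derivative (derivative F) := by
        rw [Function.iterate_succ, Function.iterate_one, Function.comp_apply]
      rw [h21, hFder]
      simp [derivative_X_pow, mul_assoc]
      left
      rw [Nat.cast_mul, Nat.cast_ofNat, C_mul, map_natCast, mul_assoc]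
    rw [hF2] at hroot2
    have hev : N * ((2*g : ℕ) : K) * x ^ (2*g-1) = 0 := by
      simpa [IsRoot] using hroot2
    have h2g : ((2*g : ℕ) : K) ≠ 0 := by
      intro h0
      apply hN1
      rw [hNdef]
      push_cast at h0 ⊢
      rw [h0]; ring
    have hx0 : x = 0 := by
      rcases mul_eq_zero.mp hev with h1 | h1
      · exact absurd ((mul_eq_zero.mp h1).resolve_left hN0) h2g
      · exact pow_eq_zero_iff (by omega) |>.mp h1
    apply hB0
    rw [hx0, zero_pow (by omega : 2*g ≠ 0)] at hdx
    linear_combination -hdx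
  · -- rationality
    refine ⟨(((2*g+1 : ℕ) : ZMod ℓ) * a) / ((b : ZMod ℓ) * (1 - ((2*g+1 : ℕ) : ZMod ℓ))), ?_⟩
    have : φ ((((2*g+1 : ℕ) : ZMod ℓ) * a) / ((b : ZMod ℓ) * (1 - ((2*g+1 : ℕ) : ZMod ℓ))))
        = N * A / (B * (1 - N)) := by
      simp only [map_div₀, map_mul, map_sub, map_one, map_natCast]
      rfl
    rw [hφ] at this
    rw [this, div_eq_iff hBN]
    linear_combination -hxval
  · -- uniqueness
    intro y hy
    have hrooty : F.IsRoot y ∧ F.derivative.IsRoot y :=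
      (one_lt_rootMultiplicity_iff_isRoot hF0).mp (by omega)
    have hyval := key y hrooty.1 hrooty.2
    exact mul_right_cancel₀ hBN (hyval.trans hxval.symm)
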